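/- arXiv:2102.06668 — 2 statements merged into one kernel-verified Lean document; each statement's English description precedes it below -/
import Mathlib

section
/- Let ρ_old, ρ_new ≥ 0 and u_old, u_new ∈ ℝ^d, and Δt > 0. Then the identity ( (ρ_new u_new - ρ_old u_old)/Δt )·u_new - ( (ρ_new - ρ_old)/Δt )·|u_new|²/2 = (1/Δt)( ½ρ_new|u_new|² - ½ρ_old|u_old|² ) + (Δt/2)·ρ_old·|(u_new - u_old)/Δt|² holds. -/
/-- Discrete kinetic-energy identity for the backward Euler time discretization
of the momentum equation. -/
theorem stmt_10 (d : ℕ) (ρo ρn Δt : ℝ) (hρo : 0 ≤ ρo) (hρn : 0 ≤ ρn)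
    (hΔt : 0 < Δt) (uo un : EuclideanSpace ℝ (Fin d)) :
    (inner ℝ (Δt⁻¹ • (ρn • un - ρo • uo)) un : ℝ)
        - ((ρn - ρo) / Δt) * (‖un‖ ^ 2 / 2) =
      ((1 / 2) * ρn * ‖un‖ ^ 2 - (1 / 2) * ρo * ‖uo‖ ^ 2) / Δt
        + (Δt / 2) * ρo * ‖Δt⁻¹ • (un - uo)‖ ^ 2 := by
  have hΔt' : Δt ≠ 0 := ne_of_gt hΔt
  have h1 : (inner ℝ (Δt⁻¹ • (ρn • un - ρo • uo)) un : ℝ)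
      = Δt⁻¹ * (ρn * ‖un‖ ^ 2 - ρo * inner ℝ uo un) := by
    rw [real_inner_smul_left, inner_sub_left, real_inner_smul_left,
      real_inner_smul_left, real_inner_self_eq_norm_sq]
  have h2 : ‖Δt⁻¹ • (un - uo)‖ ^ 2 = Δt⁻¹ ^ 2 * ‖un - uo‖ ^ 2 := by
    rw [norm_smul, mul_pow, Real.norm_eq_abs, sq_abs]
  have h3 : ‖un - uo‖ ^ 2 = ‖un‖ ^ 2 - 2 * inner ℝ uo un + ‖uo‖ ^ 2 := by
    rw [norm_sub_sq_real, real_inner_comm]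
  rw [h1, h2, h3]
  field_simp
  ring
end

section
/- Let ρ_in, ρ_out ≥ 0, w_in, w_out ∈ ℝ^d, and s ∈ ℝ. Define ρ_up := ρ_in if s ≥ 0 and ρ_out if s < 0, [[w]] := w_out - w_in, ⟨w⟩ := (w_in + w_out)/2. Then ρ_up·( w_up·[[w]] - ½[[|w|²]] )·s = -½ ρ_up |[[w]]|² |s|, where w_up := w_in if s ≥ 0, w_out if s < 0, and [[|w|²]] := |w_out|² - |w_in|². -/
/-- Pointwise (single-face) upwind-flux energy identity: the upwind convective
flux for the kinetic energy dissipates. -/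
theorem stmt_12 (d : ℕ) (ρin ρout : ℝ) (hin : 0 ≤ ρin) (hout : 0 ≤ ρout)
    (win wout : EuclideanSpace ℝ (Fin d)) (s : ℝ) :
    (if 0 ≤ s then ρin else ρout) *
        ((inner ℝ (if 0 ≤ s then win else wout) (wout - win) : ℝ)
          - (‖wout‖ ^ 2 - ‖win‖ ^ 2) / 2) * s =
      -(1 / 2) * (if 0 ≤ s then ρin else ρout) * ‖wout - win‖ ^ 2 * |s| := by
  have hsq : (‖wout - win‖ : ℝ) ^ 2 =
      ‖wout‖ ^ 2 - 2 * (inner ℝ win wout : ℝ) + ‖win‖ ^ 2 := by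
    rw [← real_inner_self_eq_norm_sq, ← real_inner_self_eq_norm_sq,
      ← real_inner_self_eq_norm_sq, inner_sub_sub_self, real_inner_comm wout win]
    ring
  have h1 : (inner ℝ win (wout - win) : ℝ) = (inner ℝ win wout : ℝ) - ‖win‖ ^ 2 := by
    rw [inner_sub_right, real_inner_self_eq_norm_sq]
  have h2 : (inner ℝ wout (wout - win) : ℝ) = ‖wout‖ ^ 2 - (inner ℝ wout win : ℝ) := by
    rw [inner_sub_right, real_inner_self_eq_norm_sq]
  by_cases hs : 0 ≤ s
  · simp only [hs, if_true, abs_of_nonneg hs, h1, hsq]; ring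
  · simp only [hs, if_false, abs_of_neg (lt_of_not_ge hs), h2, hsq,
      real_inner_comm wout win]; ring
end
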